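/- Let P and Q be probability measures on a measurable space X, let f₀ ∈ L²(P) ∩ L¹(Q) with Var_P[f₀] > 0, let σ² > 0, and set Δ := E_Q[f₀] − E_P[f₀]. Among all w ∈ L²(P) with E_P[w] = 1, the functional w ↦ (E_P[w·f₀] − E_Q[f₀])² + σ²·(E_P[w²] − 1) is uniquely minimized at w* = 1 + (Δ / (Var_P[f₀] + σ²))·(f₀ − E_P[f₀]); the minimum value equals σ²·Δ² / (Var_P[f₀] + σ²), and the bias of the minimizer satisfies |E_P[w*·f₀] − E_Q[f₀]| = (σ² / (Var_P[f₀] + σ²))·|Δ|. -/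

import Mathlib

open MeasureTheory

lemma memL2_mul_integrable {X : Type*} [MeasurableSpace X] {P : Measure X} {f g : X → ℝ}
    (hf : MemLp f 2 P) (hg : MemLp g 2 P) : Integrable (fun x => f x * g x) P := by
  have h := (((hf.add hg).integrable_sq.sub hf.integrable_sq).sub hg.integrable_sq).mul_const
    (2⁻¹ : ℝ)
  have he : (fun x => f x * g x) = fun x => (((f x + g x) ^ 2 - f x ^ 2) - g x ^ 2) * (2⁻¹ : ℝ) := by
    ext x; ring
  rw [he]; exact h

/-- the full-information case.  Among all weights `w ∈ L²(P)` with
`E_P[w] = 1`, the MSE functional `w ↦ (E_P[w·f₀] − E_Q[f₀])² + σ²·(E_P[w²] − 1)` is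
uniquely minimized at `w* = 1 + (Δ/(Var_P[f₀] + σ²))·(f₀ − E_P[f₀])` where
`Δ = E_Q[f₀] − E_P[f₀]`; the minimum value is `σ²·Δ²/(Var_P[f₀] + σ²)` and the bias of the
minimizer is `(σ²/(Var_P[f₀] + σ²))·|Δ|`. -/
theorem stmt_6 {X : Type*} [MeasurableSpace X] (P Q : Measure X)
    [IsProbabilityMeasure P] [IsProbabilityMeasure Q]
    (f₀ : X → ℝ) (hf₀2 : MemLp f₀ 2 P) (hf₀Q : Integrable f₀ Q)
    (EPf EQf VarPf : ℝ)
    (hEPf : EPf = ∫ x, f₀ x ∂P) (hEQf : EQf = ∫ x, f₀ x ∂Q)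
    (hVarPf : VarPf = (∫ x, (f₀ x) ^ 2 ∂P) - EPf ^ 2) (hVarpos : 0 < VarPf)
    (σ2 : ℝ) (hσ2 : 0 < σ2)
    (Δ : ℝ) (hΔ : Δ = EQf - EPf)
    (K : (X → ℝ) → ℝ)
    (hK : K = fun w => ((∫ x, w x * f₀ x ∂P) - EQf) ^ 2 + σ2 * ((∫ x, (w x) ^ 2 ∂P) - 1))
    (wstar : X → ℝ)
    (hwstar : wstar = fun x => 1 + (Δ / (VarPf + σ2)) * (f₀ x - EPf)) :
    -- w* is feasible
    (MemLp wstar 2 P ∧ (∫ x, wstar x ∂P) = 1) ∧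
    -- minimum value
    K wstar = σ2 * Δ ^ 2 / (VarPf + σ2) ∧
    -- minimality
    (∀ w : X → ℝ, MemLp w 2 P → (∫ x, w x ∂P) = 1 → K wstar ≤ K w) ∧
    -- uniqueness (P-a.e.)
    (∀ w : X → ℝ, MemLp w 2 P → (∫ x, w x ∂P) = 1 → K w = K wstar → w =ᵐ[P] wstar) ∧
    -- bias of the minimizer
    |(∫ x, wstar x * f₀ x ∂P) - EQf| = (σ2 / (VarPf + σ2)) * |Δ| := by
  have hD : (0:ℝ) < VarPf + σ2 := by linarith
  have hDne : VarPf + σ2 ≠ 0 := ne_of_gt hD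
  set c : ℝ := Δ / (VarPf + σ2) with hc
  have hfint : Integrable f₀ P := hf₀2.integrable one_le_two
  have hf2int : Integrable (fun x => f₀ x ^ 2) P := hf₀2.integrable_sq
  -- MemLp of wstar
  have hwstar2 : MemLp wstar 2 P := by
    rw [hwstar]
    exact MemLp.add (f := fun _ => (1:ℝ)) (g := fun x => c * (f₀ x - EPf)) (memLp_const 1) ((hf₀2.sub (memLp_const EPf)).const_mul c)
  -- ∫ wstar = 1
  have hint_wstar : (∫ x, wstar x ∂P) = 1 := by
    have hA : Integrable (fun x => c * (f₀ x - EPf)) P :=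
      (hfint.sub (integrable_const EPf)).const_mul c
    have hB : Integrable (fun x => f₀ x - EPf) P := hfint.sub (integrable_const EPf)
    rw [hwstar]
    rw [show (fun x => 1 + c * (f₀ x - EPf)) = fun x => (1:ℝ) + c * (f₀ x - EPf) from rfl,
      integral_add (integrable_const 1) hA, integral_const_mul _ _, integral_sub hfint
      (integrable_const EPf), ← hEPf]
    simp
  -- ∫ wstar * f₀ = EPf + c * VarPf
  have h1 : (∫ x, wstar x * f₀ x ∂P) = EPf + c * VarPf := by
    have he : (fun x => wstar x * f₀ x)
        = fun x => f₀ x + (c * (f₀ x ^ 2) - (c * EPf) * f₀ x) := by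
      rw [hwstar]; ext x; ring
    have hA : Integrable (fun x => c * (f₀ x ^ 2) - (c * EPf) * f₀ x) P :=
      (hf2int.const_mul c).sub (hfint.const_mul (c * EPf))
    rw [he, integral_add hfint hA,
      integral_sub (hf2int.const_mul c) (hfint.const_mul (c * EPf)),
      integral_const_mul _ _, integral_const_mul _ _, ← hEPf]
    rw [hVarPf]; ring
  -- ∫ wstar² = 1 + c² * VarPf
  have h2 : (∫ x, wstar x ^ 2 ∂P) = 1 + c ^ 2 * VarPf := by
    have he : (fun x => wstar x ^ 2)
        = fun x => (1 + (c ^ 2 * EPf ^ 2 - 2 * c * EPf))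
            + ((2 * c - 2 * c ^ 2 * EPf) * f₀ x + c ^ 2 * f₀ x ^ 2) := by
      rw [hwstar]; ext x; ring
    have hA : Integrable (fun x => (2 * c - 2 * c ^ 2 * EPf) * f₀ x + c ^ 2 * f₀ x ^ 2) P :=
      (hfint.const_mul _).add (hf2int.const_mul _)
    rw [he, integral_add (integrable_const _) hA,
      integral_add (hfint.const_mul _) (hf2int.const_mul _),
      integral_const_mul _ _, integral_const_mul _ _, ← hEPf, integral_const]
    simp only [measure_univ, ENNReal.toReal_one, smul_eq_mul, one_mul, probReal_univ]
    rw [hVarPf]; ring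
  -- bias of wstar
  have hbias : (∫ x, wstar x * f₀ x ∂P) - EQf = -(σ2 * Δ) / (VarPf + σ2) := by
    rw [h1, hc, hΔ]; field_simp; ring
  -- key decomposition for any feasible w
  have key : ∀ w : X → ℝ, MemLp w 2 P → (∫ x, w x ∂P) = 1 →
      K w = ((∫ x, w x * f₀ x ∂P) - EPf - c * VarPf) ^ 2 + σ2 * Δ ^ 2 / (VarPf + σ2)
        + σ2 * (∫ x, (w x - wstar x) ^ 2 ∂P) := by
    intro w hw hw1
    have hwf : Integrable (fun x => w x * f₀ x) P := memL2_mul_integrable hw hf₀2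
    have hw2 : Integrable (fun x => w x ^ 2) P := hw.integrable_sq
    have hwint : Integrable w P := hw.integrable one_le_two
    -- compute ∫ (w - wstar)²
    have hs : (∫ x, (w x - wstar x) ^ 2 ∂P)
        = (∫ x, w x ^ 2 ∂P) - 1 - c ^ 2 * VarPf
          - 2 * c * ((∫ x, w x * f₀ x ∂P) - EPf - c * VarPf) := by
      have he : (fun x => (w x - wstar x) ^ 2)
          = fun x => (w x ^ 2 + wstar x ^ 2)
              - ((2:ℝ) * w x + (2 * c * (w x * f₀ x) - 2 * c * EPf * w x)) := by
        rw [hwstar]; ext x; ring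
      have hA : Integrable (fun x => w x ^ 2 + wstar x ^ 2) P := hw2.add hwstar2.integrable_sq
      have hB : Integrable (fun x => 2 * c * (w x * f₀ x) - 2 * c * EPf * w x) P :=
        (hwf.const_mul _).sub (hwint.const_mul _)
      have hC : Integrable (fun x => (2:ℝ) * w x + (2 * c * (w x * f₀ x) - 2 * c * EPf * w x)) P :=
        (hwint.const_mul 2).add hB
      rw [he, integral_sub hA hC,
        integral_add hw2 hwstar2.integrable_sq,
        integral_add (hwint.const_mul 2) hB,
        integral_sub (hwf.const_mul _) (hwint.const_mul _),
        integral_const_mul _ _, integral_const_mul _ _, integral_const_mul _ _, h2, hw1]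
      ring
    have hcD : c * (VarPf + σ2) = Δ := by rw [hc]; field_simp
    rw [hK]
    simp only
    rw [hs]
    have hEQ : EQf = EPf + Δ := by rw [hΔ]; ring
    rw [hEQ]
    have hΔc : Δ ^ 2 / (VarPf + σ2) = c ^ 2 * (VarPf + σ2) := by
      rw [← hcD]; field_simp
    have : σ2 * Δ ^ 2 / (VarPf + σ2) = σ2 * (Δ ^ 2 / (VarPf + σ2)) := by ring
    rw [this, hΔc]
    have hΔeq : Δ = c * VarPf + c * σ2 := by rw [← hcD]; ring
    rw [hΔeq]
    ring
  constructor
  · exact ⟨hwstar2, hint_wstar⟩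
  refine ⟨?_, ?_, ?_, ?_⟩
  · -- minimum value
    have := key wstar hwstar2 hint_wstar
    rw [this, h1]
    simp
  · -- minimality
    intro w hw hw1
    rw [key w hw hw1, key wstar hwstar2 hint_wstar, h1]
    have hsq : (0:ℝ) ≤ ∫ x, (w x - wstar x) ^ 2 ∂P :=
      integral_nonneg fun x => sq_nonneg _
    have h0 : (∫ x, (wstar x - wstar x) ^ 2 ∂P) = 0 := by simp
    rw [h0]
    nlinarith [sq_nonneg ((∫ x, w x * f₀ x ∂P) - EPf - c * VarPf)]
  · -- uniqueness
    intro w hw hw1 hKw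
    rw [key w hw hw1, key wstar hwstar2 hint_wstar, h1] at hKw
    have h0 : (∫ x, (wstar x - wstar x) ^ 2 ∂P) = 0 := by simp
    rw [h0] at hKw
    have hsq : (0:ℝ) ≤ ∫ x, (w x - wstar x) ^ 2 ∂P :=
      integral_nonneg fun x => sq_nonneg _
    have hs0 : (∫ x, (w x - wstar x) ^ 2 ∂P) = 0 := by
      nlinarith [sq_nonneg ((∫ x, w x * f₀ x ∂P) - EPf - c * VarPf)]
    have hint : Integrable (fun x => (w x - wstar x) ^ 2) P := (hw.sub hwstar2).integrable_sq
    have hae : (fun x => (w x - wstar x) ^ 2) =ᵐ[P] 0 :=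
      (integral_eq_zero_iff_of_nonneg (fun x => sq_nonneg _) hint).mp hs0
    filter_upwards [hae] with x hx
    have : (w x - wstar x) ^ 2 = 0 := hx
    have := pow_eq_zero_iff (n := 2) (by norm_num) |>.mp this
    linarith [this]
  · -- bias
    rw [hbias]
    rw [abs_div, abs_neg, abs_mul, abs_of_pos hσ2, abs_of_pos hD]
    ring
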